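/- arXiv:1402.0653 — 3 statements merged into one kernel-verified Lean document; each statement's English description precedes it below -/
import Mathlib

section
/- Let M ≥ 1 and let M(u,θ) be the (M+1)×(M+1) tridiagonal matrix with all diagonal entries equal to u, all subdiagonal entries equal to θ, and superdiagonal entries 1, 2, …, M (i.e. entry (i+1,i) = θ, entry (i,i) = u, entry (i,i+1) = i for 1-based indexing shifted so that the superdiagonal entry in row α is α+1 for α = 0,…,M−1). Then the characteristic polynomial of M(u,θ) equals θ^{(M+1)/2} · He_{M+1}((λ−u)/√θ), for all u ∈ ℝ and θ > 0. -/
noncomputable def He : ℕ → ℝ → ℝ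
  | 0, _ => 1
  | 1, x => x
  | (n + 2), x => x * He (n + 1) x - (n + 1 : ℝ) * He n x

/-- The tridiagonal matrix M(u,θ): diagonal u, subdiagonal θ, superdiagonal 1,…,M. -/
noncomputable def Mtri (M : ℕ) (u θ : ℝ) : Matrix (Fin (M + 1)) (Fin (M + 1)) ℝ :=
  fun i j =>
    if (i : ℕ) = (j : ℕ) then u
    else if (i : ℕ) = (j : ℕ) + 1 then θ
    else if (j : ℕ) = (i : ℕ) + 1 then (i : ℝ) + 1
    else 0

noncomputable def T (a : ℝ) (b c : ℕ → ℝ) : (n : ℕ) → Matrix (Fin n) (Fin n) ℝ :=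
  fun _ i j =>
    if (i : ℕ) = (j : ℕ) then a
    else if (i : ℕ) = (j : ℕ) + 1 then b j
    else if (j : ℕ) = (i : ℕ) + 1 then c i
    else 0

lemma T_val (a : ℝ) (b c : ℕ → ℝ) (n : ℕ) (i j : Fin n) :
    T a b c n i j =
      if (i : ℕ) = (j : ℕ) then a
      else if (i : ℕ) = (j : ℕ) + 1 then b j
      else if (j : ℕ) = (i : ℕ) + 1 then c i
      else 0 := rfl

lemma detB (a : ℝ) (b c : ℕ → ℝ) (n : ℕ) :
    ((T a b c (n + 2)).submatrix Fin.castSucc ((Fin.last n).castSucc).succAbove).det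
      = c n * (T a b c n).det := by
  rw [Matrix.det_succ_column _ (Fin.last n)]
  rw [Fin.sum_univ_castSucc]
  have hcol : ((Fin.last n).castSucc).succAbove (Fin.last n) = Fin.last (n+1) := by
    rw [Fin.succAbove_of_le_castSucc _ _ le_rfl]; rfl
  have hz : ∀ i : Fin n,
      (-1 : ℝ) ^ (((i.castSucc : Fin (n+1)) : ℕ) + ((Fin.last n : Fin (n+1)) : ℕ)) *
        (T a b c (n+2)).submatrix Fin.castSucc ((Fin.last n).castSucc).succAbove
          i.castSucc (Fin.last n) *
        (((T a b c (n+2)).submatrix Fin.castSucc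
            ((Fin.last n).castSucc).succAbove).submatrix
          i.castSucc.succAbove (Fin.last n).succAbove).det = 0 := by
    intro i
    have hi : (i : ℕ) < n := i.isLt
    have : (T a b c (n+2)).submatrix Fin.castSucc ((Fin.last n).castSucc).succAbove
        i.castSucc (Fin.last n) = 0 := by
      simp only [Matrix.submatrix_apply, hcol, T_val, Fin.val_last, Fin.coe_castSucc]
      rw [if_neg (by omega), if_neg (by omega), if_neg (by omega)]
    rw [this]; ring
  rw [Finset.sum_eq_zero (fun i _ => hz i), zero_add]
  have hent : (T a b c (n+2)).submatrix Fin.castSucc ((Fin.last n).castSucc).succAbove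
      (Fin.last n) (Fin.last n) = c n := by
    simp only [Matrix.submatrix_apply, hcol, T_val, Fin.val_last, Fin.coe_castSucc]
    split_ifs <;> first | rfl | omega
  have hmin : (((T a b c (n+2)).submatrix Fin.castSucc
        ((Fin.last n).castSucc).succAbove).submatrix
      (Fin.last n).succAbove (Fin.last n).succAbove) = T a b c n := by
    ext k l
    have hl : (l : ℕ) < n := l.isLt
    simp only [Matrix.submatrix_apply, Fin.succAbove_last_apply]
    rw [Fin.succAbove_of_castSucc_lt _ _ (by simp [Fin.lt_def, hl])]
    simp [T_val]
  rw [hent, hmin]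
  have : (-1 : ℝ) ^ (((Fin.last n : Fin (n+1)) : ℕ) + ((Fin.last n : Fin (n+1)) : ℕ)) = 1 :=
    Even.neg_one_pow ⟨n, by simp [Fin.val_last]⟩
  rw [this]; ring

lemma detT_rec (a : ℝ) (b c : ℕ → ℝ) (n : ℕ) :
    (T a b c (n + 2)).det
      = a * (T a b c (n + 1)).det - b n * c n * (T a b c n).det := by
  rw [Matrix.det_succ_row _ (Fin.last (n + 1))]
  rw [Fin.sum_univ_castSucc, Fin.sum_univ_castSucc]
  have hz : ∀ j : Fin n,
      (-1 : ℝ) ^ ((Fin.last (n+1) : ℕ) + ((j.castSucc.castSucc : Fin (n+2)) : ℕ)) *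
        T a b c (n+2) (Fin.last (n+1)) j.castSucc.castSucc *
        ((T a b c (n+2)).submatrix (Fin.last (n+1)).succAbove
          (j.castSucc.castSucc).succAbove).det = 0 := by
    intro j
    have hj : (j : ℕ) < n := j.isLt
    have : T a b c (n+2) (Fin.last (n+1)) j.castSucc.castSucc = 0 := by
      simp only [T_val, Fin.val_last, Fin.coe_castSucc]
      rw [if_neg (by omega), if_neg (by omega), if_neg (by omega)]
    rw [this]; ring
  rw [Finset.sum_eq_zero (fun j _ => hz j), zero_add]
  have hrow : (Fin.last (n+1)).succAbove = Fin.castSucc := Fin.succAbove_last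
  rw [hrow]
  have hent2 : T a b c (n+2) (Fin.last (n+1)) (Fin.last n).castSucc = b n := by
    simp only [T_val, Fin.val_last, Fin.coe_castSucc]
    split_ifs <;> first | rfl | omega
  have hent3 : T a b c (n+2) (Fin.last (n+1)) (Fin.last (n+1)) = a := by
    simp only [T_val, Fin.val_last]
    split_ifs <;> first | rfl | omega
  have hmin3 : (T a b c (n+2)).submatrix Fin.castSucc Fin.castSucc
      = T a b c (n+1) := by
    ext k l
    simp [Matrix.submatrix_apply, T_val]
  rw [hent2, hent3, hmin3, detB]
  have s2 : (-1 : ℝ) ^ ((Fin.last (n+1) : ℕ) + (((Fin.last n).castSucc : Fin (n+2)) : ℕ))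
      = -1 := Odd.neg_one_pow ⟨n, by simp [Fin.val_last]; ring⟩
  have s3 : (-1 : ℝ) ^ ((Fin.last (n+1) : ℕ) + ((Fin.last (n+1) : Fin (n+2)) : ℕ)) = 1 :=
    Even.neg_one_pow ⟨n + 1, by simp [Fin.val_last]⟩
  rw [s2, s3]; ring

lemma detT_He (u θ : ℝ) (hθ : 0 < θ) (lam : ℝ) (n : ℕ) :
    (T (lam - u) (fun _ => -θ) (fun i => -((i : ℝ) + 1)) n).det
      = Real.sqrt θ ^ n * He n ((lam - u) / Real.sqrt θ) := by
  set s := Real.sqrt θ with hs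
  have hs0 : s ≠ 0 := ne_of_gt (Real.sqrt_pos.mpr hθ)
  have hsq : s * s = θ := Real.mul_self_sqrt hθ.le
  set x := (lam - u) / s with hx
  have hsx : s * x = lam - u := by rw [hx]; field_simp
  induction n using Nat.strong_induction_on with
  | _ n ih =>
    match n with
    | 0 => simp [Matrix.det_fin_zero, He]
    | 1 =>
      rw [Matrix.det_fin_one]
      show (lam - u) = s ^ 1 * He 1 x
      simp [He, hsx]
    | (m + 2) =>
      rw [detT_rec, ih (m+1) (by omega), ih m (by omega)]
      show _ = s ^ (m+2) * He (m+2) x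
      have hHe : He (m+2) x = x * He (m+1) x - (m+1 : ℝ) * He m x := rfl
      rw [hHe]
      have h1 : s ^ (m+2) = s * s ^ (m+1) := by ring
      have h2 : s ^ (m+2) = θ * s ^ m := by
        rw [← hsq]; ring
      calc (lam - u) * (s ^ (m+1) * He (m+1) x)
            - -θ * -((m : ℝ) + 1) * (s ^ m * He m x)
          = (s * x) * (s ^ (m+1) * He (m+1) x)
              - ((m:ℝ)+1) * ((s * s) * s ^ m) * He m x := by
            rw [hsx, hsq]; ring
        _ = s ^ (m+2) * (x * He (m+1) x - ((m:ℝ)+1) * He m x) := by ring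

theorem charpoly_tridiagonal_hermite (M : ℕ) (hM : 1 ≤ M) (u θ : ℝ) (hθ : 0 < θ)
    (lam : ℝ) :
    (lam • (1 : Matrix (Fin (M + 1)) (Fin (M + 1)) ℝ) - Mtri M u θ).det =
      Real.sqrt θ ^ (M + 1) * He (M + 1) ((lam - u) / Real.sqrt θ) := by
  have hT : lam • (1 : Matrix (Fin (M + 1)) (Fin (M + 1)) ℝ) - Mtri M u θ
      = T (lam - u) (fun _ => -θ) (fun i => -((i : ℝ) + 1)) (M + 1) := by
    ext i j
    simp only [Matrix.sub_apply, Matrix.smul_apply, Matrix.one_apply, Mtri, T_val,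
      smul_eq_mul, Fin.ext_iff]
    split_ifs <;> ring
  rw [hT, detT_He u θ hθ lam (M + 1)]
end

section
/- For all M ≥ 1, u ∈ ℝ, and θ > 0, the tridiagonal matrix M(u,θ) of size (M+1)×(M+1) (diagonal entries u, subdiagonal entries θ, superdiagonal entries 1, …, M) is diagonalizable over ℝ, with M+1 distinct real eigenvalues u + c_j √θ, where c_0 < ⋯ < c_M are the roots of the Hermite polynomial He_{M+1}. -/
open Polynomial

noncomputable def heP : ℕ → ℝ[X]
  | 0 => 1
  | 1 => X
  | (n + 2) => X * heP (n + 1) - C ((n : ℝ) + 1) * heP n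

lemma heP_eval (n : ℕ) (x : ℝ) : (heP n).eval x = He n x := by
  induction n using Nat.strong_induction_on with
  | _ n ih =>
    match n with
    | 0 => simp [heP, He]
    | 1 => simp [heP, He]
    | (n + 2) =>
      simp only [heP, He, eval_sub, eval_mul, eval_X, eval_C,
        ih (n+1) (by omega), ih n (by omega)]

lemma heP_monic_deg (n : ℕ) : (heP n).Monic ∧ (heP n).natDegree = n := by
  induction n using Nat.strong_induction_on with
  | _ n ih =>
    match n with
    | 0 => exact ⟨monic_one, natDegree_one⟩
    | 1 => exact ⟨monic_X, natDegree_X⟩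
    | (n + 2) =>
      obtain ⟨hm1, hd1⟩ := ih (n+1) (by omega)
      obtain ⟨hm0, hd0⟩ := ih n (by omega)
      have hmx : (X * heP (n+1)).Monic := monic_X.mul hm1
      have hdx : (X * heP (n+1)).natDegree = n + 2 := by
        rw [monic_X.natDegree_mul hm1, natDegree_X, hd1]; omega
      have hlt : (C ((n : ℝ) + 1) * heP n).degree < (X * heP (n+1)).degree := by
        rw [degree_C_mul (by positivity : ((n:ℝ)+1) ≠ 0), degree_eq_natDegree hm0.ne_zero, degree_eq_natDegree hmx.ne_zero, hd0, hdx]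
        exact_mod_cast (by omega : n < n + 2)
      refine ⟨hmx.sub_of_left hlt, ?_⟩
      have := degree_sub_eq_left_of_degree_lt hlt
      rw [heP, natDegree_eq_of_degree_eq this, hdx]

lemma heP_eq_prod (n : ℕ) (t : ℕ → ℝ) (hmono : ∀ i j, i < j → j < n → t i < t j)
    (hroot : ∀ i, i < n → He n (t i) = 0) :
    heP n = ∏ i ∈ Finset.range n, (X - C (t i)) := by
  obtain ⟨hm, hd⟩ := heP_monic_deg n
  have hmq : (∏ i ∈ Finset.range n, (X - C (t i))).Monic :=
    monic_prod_of_monic _ _ (fun i _ => monic_X_sub_C _)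
  have hdq : (∏ i ∈ Finset.range n, (X - C (t i))).natDegree = n := by
    rw [natDegree_prod _ _ (fun i _ => X_sub_C_ne_zero _)]
    simp [natDegree_X_sub_C]
  by_cases hzero : heP n - ∏ i ∈ Finset.range n, (X - C (t i)) = 0
  · exact sub_eq_zero.mp hzero
  exfalso
  apply hzero
  have hdlt : (heP n - ∏ i ∈ Finset.range n, (X - C (t i))).natDegree < n := by
    rw [natDegree_lt_iff_degree_lt hzero]
    have hdeg : (heP n).degree = (∏ i ∈ Finset.range n, (X - C (t i))).degree := by
      rw [degree_eq_natDegree hm.ne_zero, degree_eq_natDegree hmq.ne_zero, hd, hdq]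
    have hlc : (heP n).leadingCoeff = (∏ i ∈ Finset.range n, (X - C (t i))).leadingCoeff := by
      rw [hm.leadingCoeff, hmq.leadingCoeff]
    have := degree_sub_lt hdeg hm.ne_zero hlc
    rw [degree_eq_natDegree hm.ne_zero, hd] at this
    exact this
  have hinj : Function.Injective (fun i : Fin n => t i) := by
    intro i j hij
    rcases lt_trichotomy (i : ℕ) (j : ℕ) with h | h | h
    · exact absurd hij (ne_of_lt (hmono _ _ h j.2))
    · exact Fin.ext h
    · exact absurd hij.symm (ne_of_lt (hmono _ _ h i.2))
  apply eq_zero_of_natDegree_lt_card_of_eval_eq_zero _ hinj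
  · intro i
    simp only [eval_sub, heP_eval, hroot i i.2, eval_prod, eval_sub, eval_X, eval_C]
    rw [Finset.prod_eq_zero (f := fun x => t ↑i - t x) (Finset.mem_range.mpr i.2)
      (sub_self (t ↑i))]
    ring
  · simpa using hdlt

open Filter in
lemma exists_root_of_mul_neg {f : ℝ → ℝ} (hf : Continuous f) {a b : ℝ} (hab : a < b)
    (h : f a * f b < 0) : ∃ c, a < c ∧ c < b ∧ f c = 0 := by
  rcases mul_neg_iff.mp h with ⟨ha, hb⟩ | ⟨ha, hb⟩
  · obtain ⟨c, hc, hfc⟩ := intermediate_value_Ioo' (le_of_lt hab) hf.continuousOn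
      (Set.mem_Ioo.mpr ⟨hb, ha⟩)
    exact ⟨c, hc.1, hc.2, hfc⟩
  · obtain ⟨c, hc, hfc⟩ := intermediate_value_Ioo (le_of_lt hab) hf.continuousOn
      (Set.mem_Ioo.mpr ⟨ha, hb⟩)
    exact ⟨c, hc.1, hc.2, hfc⟩

open Filter in
lemma exists_large_pos (p : ℝ[X]) (hp : p.Monic) (hdeg : 0 < p.degree) (B : ℝ) :
    ∃ b, B < b ∧ 0 < p.eval b := by
  have ht := p.tendsto_atTop_of_leadingCoeff_nonneg hdeg (by rw [hp.leadingCoeff]; norm_num)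
  obtain ⟨b, hb1, hb2⟩ := ((eventually_gt_atTop B).and (ht.eventually_gt_atTop 0)).exists
  exact ⟨b, hb1, hb2⟩

open Filter in
lemma exists_small_sign (p : ℝ[X]) (hp : p.Monic) (hdeg : 0 < p.degree) (B : ℝ) :
    ∃ a, a < B ∧ 0 < (-1 : ℝ)^p.natDegree * p.eval a := by
  set n := p.natDegree with hn
  have hn0 : 0 < n := natDegree_pos_iff_degree_pos.mpr hdeg
  set q : ℝ[X] := C ((-1 : ℝ)^n) * p.comp (-X) with hq
  have hnegX : (-X : ℝ[X]).natDegree = 1 := by rw [natDegree_neg, natDegree_X]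
  have hlcnegX : (-X : ℝ[X]).leadingCoeff = -1 := by
    rw [show (-X : ℝ[X]) = C (-1) * X by rw [neg_eq_neg_one_mul, ← C_1, ← C_neg], leadingCoeff_C_mul_X]
  have hlcq : q.leadingCoeff = 1 := by
    rw [hq, leadingCoeff_mul, leadingCoeff_C, leadingCoeff_comp (by rw [hnegX]; norm_num),
      hlcnegX, hp.leadingCoeff, one_mul, ← hn, ← pow_add]
    exact Even.neg_one_pow ⟨n, by ring⟩
  have hqne : q ≠ 0 := fun h => by simp [h] at hlcq
  have hdq : 0 < q.degree := by
    rw [degree_eq_natDegree hqne, hq, natDegree_C_mul (by positivity), natDegree_comp,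
      hnegX, mul_one, ← hn]
    exact_mod_cast hn0
  have ht := q.tendsto_atTop_of_leadingCoeff_nonneg hdq (by rw [hlcq]; norm_num)
  obtain ⟨b, hb1, hb2⟩ := ((eventually_gt_atTop (-B)).and (ht.eventually_gt_atTop 0)).exists
  refine ⟨-b, by linarith, ?_⟩
  have : eval b q = (-1 : ℝ)^n * p.eval (-b) := by
    rw [hq, eval_mul, eval_C, eval_comp, eval_neg, eval_X]
  rwa [this] at hb2

def Interlaced (n : ℕ) : Prop :=
  ∃ r t : ℕ → ℝ,
    (∀ i j, i < j → j ≤ n → r i < r j) ∧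
    (∀ i, i ≤ n → He (n+1) (r i) = 0) ∧
    (∀ i, i < n → He n (t i) = 0) ∧
    (∀ i, i < n → r i < t i ∧ t i < r (i+1))

lemma interlaced_zero : Interlaced 0 := by
  refine ⟨fun _ => 0, fun _ => 0, ?_, ?_, ?_, ?_⟩
  · intro i j h1 h2; omega
  · intro i _; simp [He]
  · intro i h; omega
  · intro i h; omega

lemma He_cont (m : ℕ) : Continuous (He m) := by
  have : (fun x => (heP m).eval x) = He m := funext (heP_eval m)
  rw [← this]; exact (heP m).continuous

lemma interlaced_succ (n : ℕ) (h : Interlaced n) : Interlaced (n+1) := by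
  classical
  obtain ⟨r, t, hrm, hr, ht, hint⟩ := h
  have hrle : ∀ i j, i ≤ j → j ≤ n → r i ≤ r j := by
    intro i j hij hj
    rcases eq_or_lt_of_le hij with h | h
    · rw [h]
    · exact le_of_lt (hrm i j h hj)
  have htm : ∀ i j, i < j → j < n → t i < t j := by
    intro i j hij hj
    calc t i < r (i+1) := (hint i (by omega)).2
      _ ≤ r j := hrle (i+1) j (by omega) (by omega)
      _ < t j := (hint j hj).1
  have hev : ∀ x, He n x = ∏ k ∈ Finset.range n, (x - t k) := by
    intro x
    rw [← heP_eval, heP_eq_prod n t htm ht, eval_prod]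
    simp
  -- sign facts about He n at the points r i
  have htop : 0 < He n (r n) := by
    rw [hev]
    apply Finset.prod_pos
    intro k hk
    simp only [Finset.mem_range] at hk
    have h1 : t k < r (k+1) := (hint k hk).2
    have h2 : r (k+1) ≤ r n := hrle (k+1) n (by omega) le_rfl
    linarith
  have hbot : 0 < (-1 : ℝ)^n * He n (r 0) := by
    have h1 : ∏ k ∈ Finset.range n, (t k - r 0) =
        (-1 : ℝ)^n * ∏ k ∈ Finset.range n, (r 0 - t k) := by
      calc ∏ k ∈ Finset.range n, (t k - r 0)
          = ∏ k ∈ Finset.range n, ((-1 : ℝ) * (r 0 - t k)) := by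
            apply Finset.prod_congr rfl; intros; ring
        _ = (-1 : ℝ)^n * ∏ k ∈ Finset.range n, (r 0 - t k) := by
            rw [Finset.prod_mul_distrib, Finset.prod_const, Finset.card_range]
    rw [hev, ← h1]
    apply Finset.prod_pos
    intro k hk
    simp only [Finset.mem_range] at hk
    have h2 : r 0 ≤ r k := hrle 0 k (by omega) (by omega)
    have h3 : r k < t k := (hint k hk).1
    linarith
  have hadj : ∀ i, i < n → He n (r i) * He n (r (i+1)) < 0 := by
    intro i hi
    rw [hev, hev, ← Finset.prod_mul_distrib]
    rw [← Finset.prod_sdiff (show {i} ⊆ Finset.range n by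
      simp [Finset.singleton_subset_iff, hi])]
    have hpos : 0 < ∏ k ∈ Finset.range n \ {i}, (r i - t k) * (r (i+1) - t k) := by
      apply Finset.prod_pos
      intro k hk
      simp only [Finset.mem_sdiff, Finset.mem_range, Finset.mem_singleton] at hk
      obtain ⟨hkn, hki⟩ := hk
      rcases lt_or_gt_of_ne hki with hlt | hgt
      · have h1 : t k < r i := lt_of_lt_of_le (hint k (by omega)).2 (hrle (k+1) i (by omega) (by omega))
        have h2 : t k < r (i+1) := lt_of_lt_of_le h1 (hrle i (i+1) (by omega) (by omega))
        exact mul_pos (by linarith) (by linarith)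
      · have h1 : r (i+1) ≤ r k := hrle (i+1) k (by omega) (by omega)
        have h2 : r i < t k := by
          have := (hint k (by omega)).1
          have : r i ≤ r k := hrle i k (by omega) (by omega)
          linarith [(hint k (by omega)).1]
        have h3 : r (i+1) < t k := lt_of_le_of_lt h1 (hint k (by omega)).1
        exact mul_pos_of_neg_of_neg (by linarith) (by linarith)
    have hneg : (r i - t i) * (r (i+1) - t i) < 0 :=
      mul_neg_of_neg_of_pos (by linarith [(hint i hi).1]) (by linarith [(hint i hi).2])
    rw [Finset.prod_singleton]
    exact mul_neg_of_pos_of_neg hpos hneg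
  -- values of He (n+2) at r i
  have hrec : ∀ x, He (n+2) x = x * He (n+1) x - ((n : ℝ) + 1) * He n x := fun x => rfl
  have hval : ∀ i, i ≤ n → He (n+2) (r i) = -((n : ℝ) + 1) * He n (r i) := by
    intro i hi
    rw [hrec, hr i hi]
    ring
  -- degree facts for heP (n+2)
  obtain ⟨hm2, hd2⟩ := heP_monic_deg (n+2)
  have hdeg2 : 0 < (heP (n+2)).degree := by
    rw [degree_eq_natDegree hm2.ne_zero, hd2]
    exact_mod_cast Nat.succ_pos _
  -- top root
  obtain ⟨b, hbgt, hbpos⟩ := exists_large_pos (heP (n+2)) hm2 hdeg2 (r n)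
  rw [heP_eval] at hbpos
  -- bottom point
  obtain ⟨a, halt, haneg⟩ := exists_small_sign (heP (n+2)) hm2 hdeg2 (r 0)
  rw [heP_eval, hd2] at haneg
  have hcont := He_cont (n+2)
  have hpow : ((-1 : ℝ))^(n+2) * (-1)^n = 1 := by
    rw [← pow_add]
    exact Even.neg_one_pow ⟨n+1, by ring⟩
  -- existence of all n+2 roots
  have H : ∀ i, i ≤ n+1 → ∃ s, He (n+2) s = 0 ∧ (1 ≤ i → r (i-1) < s) ∧ (i ≤ n → s < r i) := by
    intro i hi
    rcases Nat.eq_zero_or_pos i with rfl | hi1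
    · -- bottom root in (a, r 0)
      have hmul : He (n+2) a * He (n+2) (r 0) < 0 := by
        rw [hval 0 (by omega)]
        nlinarith [haneg, hbot, hpow, mul_pos haneg hbot]
      obtain ⟨c, hc1, hc2, hc3⟩ := exists_root_of_mul_neg hcont halt hmul
      exact ⟨c, hc3, by omega, fun _ => hc2⟩
    rcases Nat.lt_or_ge i (n+1) with hin | hin
    · -- middle root in (r (i-1), r i)
      have hlt : r (i-1) < r i := hrm (i-1) i (by omega) (by omega)
      have hmul : He (n+2) (r (i-1)) * He (n+2) (r i) < 0 := by
        rw [hval (i-1) (by omega), hval i (by omega)]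
        have := hadj (i-1) (by omega)
        rw [show i - 1 + 1 = i by omega] at this
        have hn1 : (0:ℝ) < (n:ℝ)+1 := by positivity
        nlinarith [this, mul_pos hn1 hn1]
      obtain ⟨c, hc1, hc2, hc3⟩ := exists_root_of_mul_neg hcont hlt hmul
      exact ⟨c, hc3, fun _ => hc1, fun _ => hc2⟩
    · -- top root in (r n, b)
      have hi2 : i = n + 1 := by omega
      subst hi2
      have hmul : He (n+2) (r n) * He (n+2) b < 0 := by
        rw [hval n le_rfl]
        have hn1 : (0:ℝ) < (n:ℝ)+1 := by positivity
        nlinarith [mul_pos htop hbpos, hn1]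
      obtain ⟨c, hc1, hc2, hc3⟩ := exists_root_of_mul_neg hcont hbgt hmul
      refine ⟨c, hc3, fun _ => ?_, by omega⟩
      simpa using hc1
  choose! s hs0 hs1 hs2 using H
  refine ⟨s, r, ?_, ?_, fun i hi => hr i (by omega), ?_⟩
  · -- strict monotonicity of s on 0..n+1
    intro i j hij hj
    have h1 : s i < r i := hs2 i (by omega) (by omega)
    have h2 : r (j-1) < s j := hs1 j (by omega) (by omega)
    have h3 : r i ≤ r (j-1) := hrle i (j-1) (by omega) (by omega)
    linarith
  · intro i hi
    exact hs0 i hi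
  · intro i hi
    constructor
    · exact hs2 i (by omega) (by omega)
    · have := hs1 (i+1) (by omega) (by omega)
      simpa using this

lemma interlaced_all (n : ℕ) : Interlaced n := by
  induction n with
  | zero => exact interlaced_zero
  | succ n ih => exact interlaced_succ n ih

lemma tri_row_sum (M : ℕ) (u θ : ℝ) (α : Fin (M+1)) (f : ℕ → ℝ) :
    ∑ k : Fin (M+1), Mtri M u θ α k * f k =
      u * f (α:ℕ) + (if 1 ≤ (α:ℕ) then θ * f ((α:ℕ) - 1) else 0) +
      (if (α:ℕ) < M then (((α:ℕ) : ℝ) + 1) * f ((α:ℕ)+1) else 0) := by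
  have hα := α.2
  by_cases h1 : 1 ≤ (α:ℕ)
  · have step1 : ∑ k : Fin (M+1), Mtri M u θ α k * f k =
        ∑ k ∈ Finset.range (M+1),
          ((if k = (α:ℕ) then u * f k else 0) + (if k = (α:ℕ) - 1 then θ * f k else 0) +
           (if k = (α:ℕ) + 1 then (((α:ℕ) : ℝ) + 1) * f k else 0)) := by
      rw [← Fin.sum_univ_eq_sum_range]
      apply Finset.sum_congr rfl
      intro k _
      simp only [Mtri]
      split_ifs <;> first | omega | ring
    rw [step1, Finset.sum_add_distrib, Finset.sum_add_distrib,
      Finset.sum_ite_eq' (Finset.range (M+1)) ((α:ℕ)) (fun k => u * f k),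
      Finset.sum_ite_eq' (Finset.range (M+1)) ((α:ℕ) - 1) (fun k => θ * f k),
      Finset.sum_ite_eq' (Finset.range (M+1)) ((α:ℕ) + 1) (fun k => (((α:ℕ):ℝ)+1) * f k)]
    simp only [Finset.mem_range]
    split_ifs <;> first | omega | ring
  · have h0 : (α:ℕ) = 0 := by omega
    have step1 : ∑ k : Fin (M+1), Mtri M u θ α k * f k =
        ∑ k ∈ Finset.range (M+1),
          ((if k = (α:ℕ) then u * f k else 0) +
           (if k = (α:ℕ) + 1 then (((α:ℕ) : ℝ) + 1) * f k else 0)) := by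
      rw [← Fin.sum_univ_eq_sum_range]
      apply Finset.sum_congr rfl
      intro k _
      simp only [Mtri]
      split_ifs <;> first | omega | ring
    rw [step1, Finset.sum_add_distrib,
      Finset.sum_ite_eq' (Finset.range (M+1)) ((α:ℕ)) (fun k => u * f k),
      Finset.sum_ite_eq' (Finset.range (M+1)) ((α:ℕ) + 1) (fun k => (((α:ℕ):ℝ)+1) * f k)]
    simp only [Finset.mem_range]
    split_ifs <;> first | omega | ring

lemma He_step (θ x : ℝ) (hθ : 0 ≤ θ) (a : ℕ) :
    θ * (Real.sqrt θ ^ a / (Nat.factorial a) * He a x) +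
      ((a:ℝ) + 2) * (Real.sqrt θ ^ (a+2) / (Nat.factorial (a+2)) * He (a+2) x)
      = x * Real.sqrt θ * (Real.sqrt θ ^ (a+1) / (Nat.factorial (a+1)) * He (a+1) x) := by
  set s : ℝ := Real.sqrt θ with hsdef
  have hs : s ^ 2 = θ := Real.sq_sqrt hθ
  have hrec : He (a+2) x = x * He (a+1) x - ((a:ℝ)+1) * He a x := rfl
  have hf2 : ((Nat.factorial (a+2) : ℕ) : ℝ) = ((a:ℝ)+2) * ((a:ℝ)+1) * (Nat.factorial a : ℕ) := by
    rw [Nat.factorial_succ, Nat.factorial_succ]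
    push_cast
    ring
  have hf1 : ((Nat.factorial (a+1) : ℕ) : ℝ) = ((a:ℝ)+1) * (Nat.factorial a : ℕ) := by
    rw [Nat.factorial_succ]; push_cast; ring
  have hfa : ((Nat.factorial a : ℕ) : ℝ) ≠ 0 := Nat.cast_ne_zero.mpr (Nat.factorial_ne_zero a)
  have ha1 : ((a:ℝ)+1) ≠ 0 := by positivity
  have ha2 : ((a:ℝ)+2) ≠ 0 := by positivity
  rw [hrec, hf2, hf1, ← hs]
  have hpow2 : s ^ (a+2) = s ^ a * s ^ 2 := by rw [pow_add]
  have hpow1 : s ^ (a+1) = s ^ a * s := pow_succ _ _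
  rw [hpow2, hpow1]
  field_simp
  ring

lemma P_isUnit (M : ℕ) (θ : ℝ) (hθ : 0 < θ) (c : Fin (M+1) → ℝ) (hc : StrictMono c) :
    IsUnit (Matrix.of fun (α j : Fin (M+1)) =>
      Real.sqrt θ ^ (α:ℕ) / (Nat.factorial (α:ℕ) : ℝ) * He (α:ℕ) (c j)) := by
  classical
  set D : Matrix (Fin (M+1)) (Fin (M+1)) ℝ :=
    Matrix.diagonal (fun α => Real.sqrt θ ^ (α:ℕ) / (Nat.factorial (α:ℕ) : ℝ)) with hD
  set L : Matrix (Fin (M+1)) (Fin (M+1)) ℝ :=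
    Matrix.of (fun α β : Fin (M+1) => (heP (α:ℕ)).coeff (β:ℕ)) with hL
  set V : Matrix (Fin (M+1)) (Fin (M+1)) ℝ := Matrix.transpose (Matrix.vandermonde c) with hV
  have hfact : (Matrix.of fun (α j : Fin (M+1)) =>
      Real.sqrt θ ^ (α:ℕ) / (Nat.factorial (α:ℕ) : ℝ) * He (α:ℕ) (c j)) = D * (L * V) := by
    ext α j
    rw [Matrix.diagonal_mul]
    simp only [Matrix.of_apply, Matrix.mul_apply, hL, hV, Matrix.transpose_apply,
      Matrix.vandermonde, Matrix.of_apply]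
    congr 1
    obtain ⟨hm, hd⟩ := heP_monic_deg (α:ℕ)
    have : He (α:ℕ) (c j) = (heP (α:ℕ)).eval (c j) := (heP_eval _ _).symm
    rw [this, eval_eq_sum_range' (n := M+1) (by rw [hd]; exact α.2)]
    rw [← Fin.sum_univ_eq_sum_range (fun i => (heP (α:ℕ)).coeff i * (c j)^i)]
  rw [hfact]
  have hdetD : IsUnit D.det := by
    rw [Matrix.det_diagonal]
    apply isUnit_iff_ne_zero.mpr
    apply Finset.prod_ne_zero_iff.mpr
    intro α _
    have h1 : 0 < Real.sqrt θ := Real.sqrt_pos.mpr hθ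
    positivity
  have hdetL : IsUnit L.det := by
    have htri : L.BlockTriangular OrderDual.toDual := by
      intro α β hαβ
      simp only [hL, Matrix.of_apply]
      apply coeff_eq_zero_of_natDegree_lt
      rw [(heP_monic_deg _).2]
      exact hαβ
    rw [Matrix.det_of_lowerTriangular L htri]
    apply isUnit_iff_ne_zero.mpr
    apply Finset.prod_ne_zero_iff.mpr
    intro α _
    simp only [hL, Matrix.of_apply]
    obtain ⟨hm, hd⟩ := heP_monic_deg (α:ℕ)
    have h1 := hm.coeff_natDegree
    rw [hd] at h1
    rw [h1]
    norm_num
  have hdetV : IsUnit V.det := by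
    rw [hV, Matrix.det_transpose, Matrix.det_vandermonde]
    apply isUnit_iff_ne_zero.mpr
    apply Finset.prod_ne_zero_iff.mpr
    intro i _
    apply Finset.prod_ne_zero_iff.mpr
    intro j hj
    have : i < j := Finset.mem_Ioi.mp hj
    exact sub_ne_zero.mpr (ne_of_gt (hc this))
  apply (Matrix.isUnit_iff_isUnit_det _).mpr
  rw [Matrix.det_mul, Matrix.det_mul]
  exact (hdetD.mul (hdetL.mul hdetV))

theorem Mtri_real_diagonalizable (M : ℕ) (hM : 1 ≤ M) (u θ : ℝ) (hθ : 0 < θ) :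
    ∃ c : Fin (M + 1) → ℝ, StrictMono c ∧ (∀ j, He (M + 1) (c j) = 0) ∧
      ∃ P : Matrix (Fin (M + 1)) (Fin (M + 1)) ℝ, IsUnit P ∧
        Mtri M u θ =
          P * Matrix.diagonal (fun j => u + c j * Real.sqrt θ) * P⁻¹ := by
  obtain ⟨r, t, hrm, hr, -, -⟩ := interlaced_all M
  set c : Fin (M+1) → ℝ := fun j => r j with hc
  have hcmono : StrictMono c := by
    intro i j hij
    exact hrm i j hij (Nat.lt_succ_iff.mp j.2)
  have hcroot : ∀ j, He (M+1) (c j) = 0 := fun j => hr j (Nat.lt_succ_iff.mp j.2)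
  set P : Matrix (Fin (M+1)) (Fin (M+1)) ℝ :=
    Matrix.of (fun α j : Fin (M+1) =>
      Real.sqrt θ ^ (α:ℕ) / (Nat.factorial (α:ℕ) : ℝ) * He (α:ℕ) (c j)) with hP
  have hPu : IsUnit P := P_isUnit M θ hθ c hcmono
  refine ⟨c, hcmono, hcroot, P, hPu, ?_⟩
  have hmain : Mtri M u θ * P = P * Matrix.diagonal (fun j => u + c j * Real.sqrt θ) := by
    ext α j
    rw [Matrix.mul_apply, Matrix.mul_diagonal]
    have hrow := tri_row_sum M u θ α
      (fun m : ℕ => Real.sqrt θ ^ m / (Nat.factorial m : ℝ) * He m (c j))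
    beta_reduce at hrow
    have hPapply : ∀ k : Fin (M+1), P k j =
        Real.sqrt θ ^ (k:ℕ) / (Nat.factorial (k:ℕ) : ℝ) * He (k:ℕ) (c j) := fun k => rfl
    simp only [hPapply]
    rw [hrow]
    rcases Nat.eq_zero_or_pos (α:ℕ) with h0 | h1
    · rw [if_neg (by omega), if_pos (by omega)]
      simp only [h0]
      norm_num [He, Nat.factorial]
      ring
    · rcases Nat.lt_or_ge (α:ℕ) M with hlt | hge
      · rw [if_pos (show 1 ≤ (α:ℕ) by omega), if_pos hlt]
        obtain ⟨a, ha⟩ : ∃ a, (α:ℕ) = a + 1 := ⟨(α:ℕ)-1, by omega⟩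
        simp only [ha, Nat.add_sub_cancel, show a + 1 + 1 = a + 2 from rfl]
        have hstep := He_step θ (c j) hθ.le a
        push_cast
        linear_combination hstep
      · rw [if_pos (show 1 ≤ (α:ℕ) by omega), if_neg (by omega)]
        obtain ⟨a, ha⟩ : ∃ a, (α:ℕ) = a + 1 := ⟨(α:ℕ)-1, by omega⟩
        have hstep := He_step θ (c j) hθ.le a
        have hz : He (a+2) (c j) = 0 := by
          rw [show a+2 = M+1 by omega]
          exact hcroot j
        rw [hz] at hstep
        simp only [ha, Nat.add_sub_cancel]
        linear_combination hstep
  have hdet : IsUnit P.det := (Matrix.isUnit_iff_isUnit_det P).mp hPu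
  have hinv : P * P⁻¹ = 1 := Matrix.mul_nonsing_inv P hdet
  calc Mtri M u θ = Mtri M u θ * (P * P⁻¹) := by rw [hinv, Matrix.mul_one]
    _ = (Mtri M u θ * P) * P⁻¹ := by rw [Matrix.mul_assoc]
    _ = P * Matrix.diagonal (fun j => u + c j * Real.sqrt θ) * P⁻¹ := by rw [hmain]
end

section
/- Let A(w) be the (M+1)×(M+1) coefficient matrix of Grad's moment system and let Â(w) = A(w) − (M+1) f_M E_{M+1,2} − ((M+1)/2) f_{M−1} E_{M+1,3}, where E_{p,q} is the matrix with a single 1 in position (p,q). Then the characteristic polynomial of Â(w) is det(λI − Â(w)) = θ^{(M+1)/2} He_{M+1}((λ − u)/√θ) for θ > 0. -/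
/-- Coefficients with the conventions f₀ = ρ, f₁ = f₂ = 0. -/
noncomputable def gcoef (ρ : ℝ) (f : ℕ → ℝ) : ℕ → ℝ :=
  fun n => if n = 0 then ρ else if n ≤ 2 then 0 else f n

/-- The coefficient matrix A(w) of Grad's (M+1)-moment system (eq. (14) of the paper),
with state w = (ρ, u, θ, f₃, …, f_M), in 0-based indices. -/
noncomputable def gradA (M : ℕ) (ρ u θ : ℝ) (f : ℕ → ℝ) :
    Matrix (Fin (M + 1)) (Fin (M + 1)) ℝ :=
  fun r c =>
    if (r : ℕ) = 0 then
      (if (c : ℕ) = 0 then u else if (c : ℕ) = 1 then ρ else 0)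
    else if (r : ℕ) = 1 then
      (if (c : ℕ) = 0 then θ / ρ else if (c : ℕ) = 1 then u
       else if (c : ℕ) = 2 then 1 else 0)
    else if (r : ℕ) = 2 then
      (if (c : ℕ) = 1 then 2 * θ else if (c : ℕ) = 2 then u
       else if (c : ℕ) = 3 then 6 / ρ else 0)
    else
      (if (c : ℕ) = 0 then -θ * gcoef ρ f ((r : ℕ) - 1) / ρ
       else if (c : ℕ) = 1 then ((r : ℕ) + 1 : ℝ) * gcoef ρ f (r : ℕ)
       else if (c : ℕ) = 2 then
         (((r : ℕ) - 1 : ℝ) * gcoef ρ f ((r : ℕ) - 1) + θ * gcoef ρ f ((r : ℕ) - 3)) / 2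
       else
         (if (c : ℕ) = 3 then -3 * gcoef ρ f ((r : ℕ) - 2) / ρ else 0) +
         (if (c : ℕ) + 1 = (r : ℕ) then θ else 0) +
         (if (c : ℕ) = (r : ℕ) then u else 0) +
         (if (c : ℕ) = (r : ℕ) + 1 then ((r : ℕ) + 1 : ℝ) else 0))

/-- The regularized coefficient matrix Â(w) = A(w) − (M+1) f_M E_{M+1,2}
    − ((M+1)/2) f_{M−1} E_{M+1,3}. -/
noncomputable def gradAhat (M : ℕ) (ρ u θ : ℝ) (f : ℕ → ℝ) :
    Matrix (Fin (M + 1)) (Fin (M + 1)) ℝ :=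
  gradA M ρ u θ f
    - (((M : ℝ) + 1) * gcoef ρ f M) •
        Matrix.single (Fin.last M) (1 : Fin (M + 1)) (1 : ℝ)
    - ((((M : ℝ) + 1) / 2) * gcoef ρ f (M - 1)) •
        Matrix.single (Fin.last M) (2 : Fin (M + 1)) (1 : ℝ)

namespace CharGrad

open Matrix

/-! ### Generic sum helpers -/

lemma fin_sum_ite {n : ℕ} (m : ℕ) (hm : m < n) (g : Fin n → ℝ) :
    (∑ k : Fin n, if (k : ℕ) = m then g k else 0) = g ⟨m, hm⟩ := by
  rw [Finset.sum_eq_single ⟨m, hm⟩]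
  · simp
  · intro b _ hb
    exact if_neg (fun h => hb (Fin.ext h))
  · intro h; exact absurd (Finset.mem_univ _) h

lemma fin_sum_ite_ge {n : ℕ} (m : ℕ) (hm : n ≤ m) (g : Fin n → ℝ) :
    (∑ k : Fin n, if (k : ℕ) = m then g k else 0) = 0 :=
  Finset.sum_eq_zero (fun k _ => if_neg (by have := k.2; omega))

/-! ### The similarity transformation -/

noncomputable def Dmat (M : ℕ) (ρ : ℝ) (f : ℕ → ℝ) :
    Matrix (Fin (M + 1)) (Fin (M + 1)) ℝ :=
  fun r c =>
    (if (c : ℕ) = (r : ℕ) then (if (r : ℕ) = 0 ∨ 3 ≤ (r : ℕ) then (1 : ℝ) else 0) else 0)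
    + (if (c : ℕ) = 1 then (if 1 ≤ (r : ℕ) then gcoef ρ f ((r : ℕ) - 1) else 0) else 0)
    + (if (c : ℕ) = 2 then (if 2 ≤ (r : ℕ) then gcoef ρ f ((r : ℕ) - 2) / 2 else 0) else 0)

noncomputable def Jmat (M : ℕ) (u θ : ℝ) :
    Matrix (Fin (M + 1)) (Fin (M + 1)) ℝ :=
  fun r c =>
    (if (c : ℕ) = (r : ℕ) then u else 0)
    + (if (c : ℕ) + 1 = (r : ℕ) then θ else 0)
    + (if (c : ℕ) = (r : ℕ) + 1 then ((r : ℕ) + 1 : ℝ) else 0)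

lemma Dmat_mul_apply {M : ℕ} (hM : 3 ≤ M) (ρ : ℝ) (f : ℕ → ℝ)
    (B : Matrix (Fin (M + 1)) (Fin (M + 1)) ℝ) (r c : Fin (M + 1)) :
    (Dmat M ρ f * B) r c =
      (if (r : ℕ) = 0 ∨ 3 ≤ (r : ℕ) then (1 : ℝ) else 0) * B r c
      + (if 1 ≤ (r : ℕ) then gcoef ρ f ((r : ℕ) - 1) else 0) * B ⟨1, by omega⟩ c
      + (if 2 ≤ (r : ℕ) then gcoef ρ f ((r : ℕ) - 2) / 2 else 0) * B ⟨2, by omega⟩ c := by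
  rw [Matrix.mul_apply]
  simp only [Dmat, add_mul, ite_mul, zero_mul]
  rw [Finset.sum_add_distrib, Finset.sum_add_distrib,
    fin_sum_ite (r : ℕ) r.2, fin_sum_ite 1 (by omega), fin_sum_ite 2 (by omega)]

lemma Jmat_mul_apply {M : ℕ} (u θ : ℝ)
    (B : Matrix (Fin (M + 1)) (Fin (M + 1)) ℝ) (r c : Fin (M + 1)) :
    (Jmat M u θ * B) r c =
      u * B r c
      + (if 1 ≤ (r : ℕ) then θ * B ⟨(r : ℕ) - 1, by have := r.2; omega⟩ c else 0)
      + (if h : (r : ℕ) < M then ((r : ℕ) + 1 : ℝ) * B ⟨(r : ℕ) + 1, by omega⟩ c else 0) := by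
  rw [Matrix.mul_apply]
  have e1 : ∀ k : Fin (M + 1), Jmat M u θ r k * B k c =
      (if (k : ℕ) = (r : ℕ) then u * B k c else 0)
      + (if (k : ℕ) + 1 = (r : ℕ) then θ * B k c else 0)
      + (if (k : ℕ) = (r : ℕ) + 1 then ((r : ℕ) + 1 : ℝ) * B k c else 0) := by
    intro k
    simp only [Jmat, add_mul, ite_mul, zero_mul]
  rw [Finset.sum_congr rfl (fun k _ => e1 k), Finset.sum_add_distrib,
    Finset.sum_add_distrib, fin_sum_ite (r : ℕ) r.2]
  congr 1
  · congr 1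
    by_cases h1 : 1 ≤ (r : ℕ)
    · have he : ∀ k : Fin (M + 1), ((k : ℕ) + 1 = (r : ℕ)) = ((k : ℕ) = (r : ℕ) - 1) :=
        fun k => by apply propext; omega
      simp only [he]
      rw [fin_sum_ite ((r : ℕ) - 1) (by have := r.2; omega), if_pos h1]
    · rw [if_neg h1]
      exact Finset.sum_eq_zero (fun k _ => if_neg (by omega))
  · by_cases h2 : (r : ℕ) < M
    · rw [fin_sum_ite ((r : ℕ) + 1) (by omega), dif_pos h2]
    · rw [fin_sum_ite_ge ((r : ℕ) + 1) (by omega), dif_neg h2]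

lemma gradAhat_apply {M : ℕ} (hM : 3 ≤ M) (ρ u θ : ℝ) (f : ℕ → ℝ) (r c : Fin (M + 1)) :
    gradAhat M ρ u θ f r c = gradA M ρ u θ f r c
      - (if (r : ℕ) = M ∧ (c : ℕ) = 1 then ((M : ℝ) + 1) * gcoef ρ f M else 0)
      - (if (r : ℕ) = M ∧ (c : ℕ) = 2 then (((M : ℝ) + 1) / 2) * gcoef ρ f (M - 1) else 0) := by
  have h1 : ((1 : Fin (M + 1)) : ℕ) = 1 := by
    exact Nat.mod_eq_of_lt (show 1 < M + 1 by omega)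
  have h2 : ((2 : Fin (M + 1)) : ℕ) = 2 := by
    exact Nat.mod_eq_of_lt (show 2 < M + 1 by omega)
  simp only [gradAhat, Matrix.sub_apply, Matrix.smul_apply, smul_eq_mul]
  congr 1
  · congr 1
    by_cases hc : (r : ℕ) = M ∧ (c : ℕ) = 1
    · rw [if_pos hc, show r = Fin.last M from Fin.ext (by simp [hc.1]),
        show c = (1 : Fin (M + 1)) from Fin.ext (by rw [h1]; exact hc.2),
        Matrix.single_apply_same, mul_one]
    · rw [if_neg hc, Matrix.single_apply_of_ne, mul_zero]
      intro h
      exact hc ⟨by rw [← h.1]; simp, by rw [← h.2]; exact h1⟩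
  · by_cases hc : (r : ℕ) = M ∧ (c : ℕ) = 2
    · rw [if_pos hc, show r = Fin.last M from Fin.ext (by simp [hc.1]),
        show c = (2 : Fin (M + 1)) from Fin.ext (by rw [h2]; exact hc.2),
        Matrix.single_apply_same, mul_one]
    · rw [if_neg hc, Matrix.single_apply_of_ne, mul_zero]
      intro h
      exact hc ⟨by rw [← h.1]; simp, by rw [← h.2]; exact h2⟩

set_option maxHeartbeats 4000000 in
lemma key {M : ℕ} (hM : 3 ≤ M) (ρ u θ : ℝ) (hρ : ρ ≠ 0) (f : ℕ → ℝ) :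
    Dmat M ρ f * gradAhat M ρ u θ f = Jmat M u θ * Dmat M ρ f := by
  have g0 : gcoef ρ f 0 = ρ := by simp [gcoef]
  have g1 : gcoef ρ f 1 = 0 := by simp [gcoef]
  have g2 : gcoef ρ f 2 = 0 := by simp [gcoef]
  ext r c
  rw [Dmat_mul_apply hM, Jmat_mul_apply]
  simp only [gradAhat_apply hM]
  obtain ⟨n, hn⟩ := r
  obtain ⟨m, hm⟩ := c
  rcases (by omega : n = 0 ∨ n = 1 ∨ n = 2 ∨ (3 ≤ n ∧ n < M) ∨ n = M) with h | h | h | ⟨h, h'⟩ | h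
  · subst h
    simp only [gradA, Dmat, Fin.val_mk, g0, g1, g2,
      show ¬((0:ℕ) = M) from by omega, show ¬((1:ℕ) = M) from by omega,
      show ¬((2:ℕ) = M) from by omega]
    try norm_num
    try simp only [g0, g1, g2]
    split_ifs <;> first | omega | (exfalso; assumption) | ring1 | (field_simp [hρ]; ring1) | field_simp [hρ]
  · subst h
    simp only [gradA, Dmat, Fin.val_mk, g0, g1, g2,
      show ¬((0:ℕ) = M) from by omega, show ¬((1:ℕ) = M) from by omega,
      show ¬((2:ℕ) = M) from by omega]
    try norm_num
    try simp only [g0, g1, g2]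
    split_ifs <;> first | omega | (exfalso; assumption) | ring1 | (field_simp [hρ]; ring1) | field_simp [hρ]
  · subst h
    simp only [gradA, Dmat, Fin.val_mk, g0, g1, g2,
      show ¬((0:ℕ) = M) from by omega, show ¬((1:ℕ) = M) from by omega,
      show ¬((2:ℕ) = M) from by omega]
    try norm_num
    try simp only [g0, g1, g2]
    split_ifs <;> first | omega | (exfalso; assumption) | ring1 | (field_simp [hρ]; ring1) | field_simp [hρ]
  · simp only [gradA, Dmat, Fin.val_mk, g0, g1, g2,
      show ¬(n = 0) from by omega, show ¬(n = 1) from by omega,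
      show ¬(n = 2) from by omega, show (3 ≤ n) from h,
      show (1 ≤ n) from by omega, show (2 ≤ n) from by omega,
      show ¬(n = M) from by omega, show (n < M) from h',
      show ¬((1:ℕ) = M) from by omega, show ¬((2:ℕ) = M) from by omega,
      show (1 ≤ n - 1) from by omega, show (2 ≤ n - 1) from by omega,
      show (1 ≤ n + 1) from by omega, show (2 ≤ n + 1) from by omega,
      show ¬((n:ℕ) + 1 = 0) from by omega, show (3 ≤ n + 1) from by omega,
      show n + 1 - 1 = n from by omega, show n + 1 - 2 = n - 1 from by omega,
      show n - 1 - 1 = n - 2 from by omega, show n - 1 - 2 = n - 3 from by omega]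
    try norm_num
    try simp only [g0, g1, g2]
    rcases (by omega : m = 0 ∨ m = 1 ∨ m = 2 ∨ m = 3 ∨ 4 ≤ m) with
      hm' | hm' | hm' | hm' | hm' <;> try subst hm'
    all_goals split_ifs <;> first | omega | (exfalso; assumption) | ring1 | (field_simp [hρ]; ring1) | field_simp [hρ]
  · simp only [gradA, Dmat, Fin.val_mk, g0, g1, g2, h,
      show ¬(M = 0) from by omega, show ¬(M = 1) from by omega,
      show ¬(M = 2) from by omega, show (3 ≤ M) from hM,
      show (1 ≤ M) from by omega, show (2 ≤ M) from by omega,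
      show ¬((1:ℕ) = M) from by omega, show ¬((2:ℕ) = M) from by omega,
      show ¬(M < M) from by omega,
      show (1 ≤ M - 1) from by omega, show (2 ≤ M - 1) from by omega,
      show M - 1 - 1 = M - 2 from by omega, show M - 1 - 2 = M - 3 from by omega]
    try norm_num
    try simp only [g0, g1, g2]
    rcases (by omega : m = 0 ∨ m = 1 ∨ m = 2 ∨ m = 3 ∨ 4 ≤ m) with
      hm' | hm' | hm' | hm' | hm' <;> try subst hm'
    all_goals split_ifs <;> first | omega | (exfalso; assumption) | ring1 | (field_simp [hρ]; ring1) | field_simp [hρ]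

lemma Dmat_lt {M : ℕ} (ρ : ℝ) (f : ℕ → ℝ) (i j : Fin (M + 1)) (hij : i < j) :
    Dmat M ρ f i j = 0 := by
  have hv : (i : ℕ) < (j : ℕ) := hij
  simp only [Dmat]
  split_ifs <;> first | (exfalso; omega) | norm_num

lemma Dmat_det_ne_zero {M : ℕ} (hM : 3 ≤ M) (ρ : ℝ) (hρ : ρ ≠ 0) (f : ℕ → ℝ) :
    (Dmat M ρ f).det ≠ 0 := by
  rw [Matrix.det_of_lowerTriangular (Dmat M ρ f)
    (fun i j hij => Dmat_lt ρ f i j hij)]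
  rw [Finset.prod_ne_zero_iff]
  intro i _
  simp only [Dmat]
  rcases (by omega : (i : ℕ) = 0 ∨ (i : ℕ) = 1 ∨ (i : ℕ) = 2 ∨ 3 ≤ (i : ℕ)) with h | h | h | h <;>
    simp [h, gcoef, hρ] <;> split_ifs <;> first | (exfalso; omega) | norm_num [hρ]

/-! ### The tridiagonal comparison matrix -/

noncomputable def Tmat (n : ℕ) (x θ : ℝ) : Matrix (Fin n) (Fin n) ℝ :=
  fun r c =>
    (if (c : ℕ) = (r : ℕ) then x else 0)
    + (if (c : ℕ) + 1 = (r : ℕ) then -θ else 0)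
    + (if (c : ℕ) = (r : ℕ) + 1 then -((r : ℕ) + 1 : ℝ) else 0)

lemma smul_sub_Jmat (M : ℕ) (u θ lam : ℝ) :
    lam • (1 : Matrix (Fin (M + 1)) (Fin (M + 1)) ℝ) - Jmat M u θ
      = Tmat (M + 1) (lam - u) θ := by
  ext r c
  simp only [Matrix.sub_apply, Matrix.smul_apply, Matrix.one_apply, smul_eq_mul,
    Jmat, Tmat, Fin.ext_iff]
  split_ifs <;> first | (exfalso; omega) | ring1

lemma Tmat_det_zero (x θ : ℝ) : (Tmat 0 x θ).det = 1 := Matrix.det_fin_zero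

lemma Tmat_det_one (x θ : ℝ) : (Tmat 1 x θ).det = x := by
  rw [Matrix.det_fin_one]
  norm_num [Tmat]

lemma Tmat_det_rec (n : ℕ) (x θ : ℝ) :
    (Tmat (n + 2) x θ).det
      = x * (Tmat (n + 1) x θ).det - ((n : ℝ) + 1) * θ * (Tmat n x θ).det := by
  have hsub1 : (Tmat (n + 2) x θ).submatrix
      (Fin.last (n + 1)).succAbove (Fin.last (n + 1)).succAbove = Tmat (n + 1) x θ := by
    rw [Fin.succAbove_last]
    ext i j
    simp [Tmat, Matrix.submatrix_apply]
  set j1 : Fin (n + 2) := Fin.castSucc (Fin.last n) with hj1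
  have hj1v : (j1 : ℕ) = n := by simp [hj1]
  have hlastv : ((Fin.last (n + 1) : Fin (n + 2)) : ℕ) = n + 1 := by simp
  rw [Matrix.det_succ_row (Tmat (n + 2) x θ) (Fin.last (n + 1))]
  rw [Finset.sum_eq_add_of_mem j1 (Fin.last (n + 1)) (Finset.mem_univ _) (Finset.mem_univ _)
    (by intro h; rw [Fin.ext_iff, hj1v, hlastv] at h; omega) ?_]
  · -- main computation
    have hval2 : Tmat (n + 2) x θ (Fin.last (n + 1)) (Fin.last (n + 1)) = x := by
      simp only [Tmat, hlastv]
      norm_num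
    have hval1 : Tmat (n + 2) x θ (Fin.last (n + 1)) j1 = -θ := by
      simp only [Tmat, hlastv, hj1v]
      norm_num
      intro h
      exfalso
      omega
    have hsgn2 : ((-1 : ℝ)) ^ ((Fin.last (n + 1) : ℕ) + (Fin.last (n + 1) : ℕ)) = 1 := by
      rw [hlastv, show (n + 1) + (n + 1) = 2 * (n + 1) by ring, pow_mul]; norm_num
    have hsgn1 : ((-1 : ℝ)) ^ ((Fin.last (n + 1) : ℕ) + (j1 : ℕ)) = -1 := by
      rw [hlastv, hj1v, show (n + 1) + n = 2 * n + 1 by ring, pow_succ, pow_mul]; norm_num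
    -- the minor at column j1
    have hminor1 : ((Tmat (n + 2) x θ).submatrix
        (Fin.last (n + 1)).succAbove j1.succAbove).det = -((n : ℝ) + 1) * (Tmat n x θ).det := by
      have hcl : j1.succAbove (Fin.last n) = Fin.last (n + 1) := by
        rw [hj1, Fin.succAbove_of_le_castSucc _ _ (le_refl _), Fin.succ_last]
      have hck : ∀ k : Fin n, j1.succAbove (Fin.castSucc k) = Fin.castSucc (Fin.castSucc k) := by
        intro k
        rw [hj1, Fin.succAbove_of_castSucc_lt]
        rw [Fin.castSucc_lt_castSucc_iff]
        exact Fin.castSucc_lt_last k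
      rw [Fin.succAbove_last, Matrix.det_succ_column _ (Fin.last n)]
      rw [Finset.sum_eq_single (Fin.last n) ?_ (fun h => absurd (Finset.mem_univ _) h)]
      · have hentry : (Tmat (n + 2) x θ).submatrix Fin.castSucc j1.succAbove
            (Fin.last n) (Fin.last n) = -((n : ℝ) + 1) := by
          rw [Matrix.submatrix_apply, hcl]
          simp only [Tmat, Fin.coe_castSucc, Fin.val_last]
          norm_num
          intro h
          exfalso
          omega
        have hsgn : ((-1 : ℝ)) ^ ((Fin.last n : ℕ) + (Fin.last n : ℕ)) = 1 := by
          rw [Fin.val_last, show n + n = 2 * n by ring, pow_mul]; norm_num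
        have hmin : ((Tmat (n + 2) x θ).submatrix Fin.castSucc j1.succAbove).submatrix
            (Fin.last n).succAbove (Fin.last n).succAbove = Tmat n x θ := by
          rw [Fin.succAbove_last, Matrix.submatrix_submatrix]
          ext i j
          rw [Matrix.submatrix_apply]
          simp only [Function.comp_apply, hck j]
          simp [Tmat, Fin.coe_castSucc]
        rw [hentry, hsgn, hmin]
        ring
      · intro i _ hi
        have hiv : (i : ℕ) ≠ n := fun h => hi (Fin.ext (by rw [h, Fin.val_last]))
        have hentry : (Tmat (n + 2) x θ).submatrix Fin.castSucc j1.succAbove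
            i (Fin.last n) = 0 := by
          rw [Matrix.submatrix_apply, hcl]
          simp only [Tmat, Fin.coe_castSucc, Fin.val_last]
          rw [if_neg (by have := i.2; omega), if_neg (by omega),
            if_neg (by have := i.2; omega)]
          ring
        rw [hentry]
        ring
    rw [hsgn1, hsgn2, hval1, hval2, hsub1, hminor1]
    ring
  · intro c _ hc
    have hc1 : (c : ℕ) ≠ n := fun h => hc.1 (Fin.ext (by rw [h, hj1v]))
    have hc2 : (c : ℕ) ≠ n + 1 := fun h => hc.2 (Fin.ext (by rw [h, hlastv]))
    have hentry : Tmat (n + 2) x θ (Fin.last (n + 1)) c = 0 := by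
      simp only [Tmat, hlastv]
      rw [if_neg (by omega), if_neg (by omega), if_neg (by have := c.2; omega)]; ring
    rw [hentry]
    ring

lemma Tmat_det (θ : ℝ) (hθ : 0 < θ) (x : ℝ) (n : ℕ) :
    (Tmat n x θ).det = Real.sqrt θ ^ n * He n (x / Real.sqrt θ) := by
  have hs : Real.sqrt θ ≠ 0 := ne_of_gt (Real.sqrt_pos.mpr hθ)
  have hss : Real.sqrt θ * Real.sqrt θ = θ := Real.mul_self_sqrt hθ.le
  suffices h : ∀ m, ((Tmat m x θ).det = Real.sqrt θ ^ m * He m (x / Real.sqrt θ)) ∧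
      ((Tmat (m + 1) x θ).det = Real.sqrt θ ^ (m + 1) * He (m + 1) (x / Real.sqrt θ)) from (h n).1
  intro m
  induction m with
  | zero =>
    constructor
    · rw [Tmat_det_zero]; simp [He]
    · rw [Tmat_det_one]
      show x = Real.sqrt θ ^ 1 * He 1 (x / Real.sqrt θ)
      rw [pow_one]
      show x = Real.sqrt θ * (x / Real.sqrt θ)
      field_simp
  | succ m ih =>
    refine ⟨ih.2, ?_⟩
    rw [Tmat_det_rec, ih.1, ih.2]
    show _ = Real.sqrt θ ^ (m + 1 + 1) * He (m + 1 + 1) (x / Real.sqrt θ)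
    rw [show He (m + 1 + 1) (x / Real.sqrt θ)
        = (x / Real.sqrt θ) * He (m + 1) (x / Real.sqrt θ)
          - ((m : ℝ) + 1) * He m (x / Real.sqrt θ) from rfl]
    rw [mul_sub]
    congr 1
    · rw [show Real.sqrt θ ^ (m + 1 + 1) = Real.sqrt θ ^ (m + 1) * Real.sqrt θ from pow_succ _ _]
      field_simp
    · rw [show Real.sqrt θ ^ (m + 1 + 1) = Real.sqrt θ ^ m * (Real.sqrt θ * Real.sqrt θ) by
        rw [pow_succ, pow_succ]; ring]
      rw [hss]
      ring

end CharGrad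

theorem charpoly_of_regularized_grad (M : ℕ) (hM : 3 ≤ M) (ρ u θ : ℝ)
    (hρ : 0 < ρ) (hθ : 0 < θ) (f : ℕ → ℝ) (lam : ℝ) :
    (lam • (1 : Matrix (Fin (M + 1)) (Fin (M + 1)) ℝ) - gradAhat M ρ u θ f).det =
      Real.sqrt θ ^ (M + 1) * He (M + 1) ((lam - u) / Real.sqrt θ) := by
  have hρ' : ρ ≠ 0 := ne_of_gt hρ
  have hDdet := CharGrad.Dmat_det_ne_zero hM ρ hρ' f
  have hsim : CharGrad.Dmat M ρ f *
      (lam • (1 : Matrix (Fin (M + 1)) (Fin (M + 1)) ℝ) - gradAhat M ρ u θ f)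
      = (lam • (1 : Matrix (Fin (M + 1)) (Fin (M + 1)) ℝ) - CharGrad.Jmat M u θ) *
        CharGrad.Dmat M ρ f := by
    rw [Matrix.mul_sub, Matrix.sub_mul, CharGrad.key hM ρ u θ hρ' f]
    congr 1
    rw [Matrix.mul_smul, Matrix.mul_one, Matrix.smul_mul, Matrix.one_mul]
  have hdet := congrArg Matrix.det hsim
  rw [Matrix.det_mul, Matrix.det_mul, mul_comm ((lam • (1 : Matrix (Fin (M + 1)) (Fin (M + 1)) ℝ)
    - CharGrad.Jmat M u θ).det)] at hdet
  have hcancel := mul_left_cancel₀ hDdet hdet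
  rw [hcancel, CharGrad.smul_sub_Jmat, CharGrad.Tmat_det θ hθ (lam - u) (M + 1)]
end
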